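/- The Bernoulli polynomials admit the integral representation Bₙ(x) = xⁿ − (n/2)x^{n−1} − i·n·∫₀^∞ ((x+is)^{n−1} − (x−is)^{n−1})/(e^{2πs} − 1) ds for all n ≥ 1. -/

import Mathlib

open Polynomial Real
open MeasureTheory Set Filter


lemma bir_geom {t : ℝ} (ht : 0 < t) :
    HasSum (fun n : ℕ => (if n = 0 then (0:ℂ) else 1) * rexp (-(2*π*n) * t))
      (1 / ((rexp (2*π*t) : ℂ) - 1)) := by
  have hrlt : rexp (-(2*π*t)) < 1 := by
    rw [Real.exp_lt_one_iff]
    nlinarith [Real.pi_pos]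
  have hgeo := (hasSum_geometric_of_lt_one (Real.exp_nonneg _) hrlt).mul_left (rexp (-(2*π*t)))
  have hreal : HasSum (fun n : ℕ => (if n = 0 then (0:ℝ) else 1) * rexp (-(2*π*n) * t))
      (1 / (rexp (2*π*t) - 1)) := by
    have hE : 1 < rexp (2*π*t) := by
      rw [Real.one_lt_exp_iff]
      positivity
    refine (hasSum_nat_add_iff' 1).mp ?_
    convert hgeo using 1
    · rfl
    · funext n
      simp only [Nat.succ_ne_zero, if_false, one_mul]
      rw [← Real.exp_nat_mul, ← Real.exp_add]
      push_cast
      ring_nf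
    · rw [Finset.sum_range_one]
      have h1 : rexp (-(2*π*t)) = (rexp (2*π*t))⁻¹ := Real.exp_neg _
      have h2 : rexp (2*π*t) ≠ 0 := (Real.exp_pos _).ne'
      have h3 : rexp (2*π*t) - 1 ≠ 0 := by linarith
      simp only [if_pos rfl, zero_mul, sub_zero, h1]
      rw [eq_comm]
      field_simp
      simp
  have hc := Complex.hasSum_ofReal.mpr hreal
  convert hc using 2 with n
  · split_ifs <;> simp
  · push_cast
    rfl

lemma bir_key (j : ℕ) (hj : j ≠ 0) :
    ∫ t in Set.Ioi (0:ℝ), (t:ℂ)^(2*j-1) / ((rexp (2*π*t) : ℂ) - 1)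
      = (-1)^(j+1) * (bernoulli (2*j) : ℂ) / (4*j) := by
  have hj0 : 0 < j := Nat.pos_of_ne_zero hj
  have hm1 : 1 ≤ 2*j := by omega
  have hs : 0 < (((2*j : ℕ) : ℂ)).re := by
    simp only [Complex.natCast_re]
    positivity
  set a : ℕ → ℂ := fun n => if n = 0 then 0 else 1 with ha
  set p : ℕ → ℝ := fun n => 2*π*n with hp'
  have hp : ∀ i, a i = 0 ∨ 0 < p i := by
    intro i
    rcases Nat.eq_zero_or_pos i with h | h
    · left; simp [ha, h]
    · right
      have : (0:ℝ) < i := by exact_mod_cast h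
      simp only [hp']
      positivity
  have hF : ∀ t ∈ Ioi (0:ℝ), HasSum (fun i => a i * rexp (-p i * t))
      ((fun t : ℝ => 1 / ((rexp (2*π*t) : ℂ) - 1)) t) := by
    intro t ht
    exact bir_geom ht
  have h_sum : Summable fun i : ℕ => ‖a i‖ / (p i) ^ (((2*j:ℕ):ℂ)).re := by
    have h1 : Summable fun n : ℕ => ((2*π) ^ ((2*j:ℕ):ℝ))⁻¹ * ((n:ℝ) ^ ((2*j:ℕ):ℝ))⁻¹ := by
      refine Summable.mul_left _ ?_
      rw [Real.summable_nat_rpow_inv]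
      exact_mod_cast (show 1 < 2*j by omega)
    refine h1.of_nonneg_of_le (fun n => by positivity) fun n => ?_
    rcases Nat.eq_zero_or_pos n with h | h
    · simp [ha, h]
      positivity
    · have hn0 : (0:ℝ) < n := by exact_mod_cast h
      have : ‖a n‖ = 1 := by simp [ha, Nat.pos_iff_ne_zero.mp h]
      rw [this, Complex.natCast_re, hp']
      rw [Real.mul_rpow (by positivity) hn0.le]
      rw [one_div, mul_inv]
  have A := hasSum_mellin hp hs hF h_sum
  set c : ℂ := Complex.Gamma ((2*j:ℕ):ℂ) / ((2*π:ℝ):ℂ)^(2*j) with hc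
  have B := (Complex.hasSum_ofReal.mpr (hasSum_zeta_nat hj)).mul_left c
  have hfun : (fun i : ℕ => Complex.Gamma ((2*j:ℕ):ℂ) * a i / (p i : ℂ) ^ ((2*j:ℕ):ℂ))
      = fun n : ℕ => c * ((1 / (n:ℝ) ^ (2*j) : ℝ) : ℂ) := by
    funext n
    rcases Nat.eq_zero_or_pos n with h | h
    · simp [ha, h, hp', zero_pow (by omega : 2*j ≠ 0)]
    · have hn0 : n ≠ 0 := Nat.pos_iff_ne_zero.mp h
      have hnR : ((n:ℝ)) ≠ 0 := Nat.cast_ne_zero.mpr hn0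
      simp only [ha, hp', if_neg hn0, mul_one, hc]
      rw [Complex.cpow_natCast]
      push_cast
      have hπ : (π:ℂ) ≠ 0 := Complex.ofReal_ne_zero.mpr Real.pi_ne_zero
      have hnC : ((n:ℂ)) ≠ 0 := Nat.cast_ne_zero.mpr hn0
      rw [mul_pow]
      field_simp
  rw [hfun] at A
  have hmel := A.unique B
  have hLHS : ∫ t in Ioi (0:ℝ), (t:ℂ)^(2*j-1) / ((rexp (2*π*t):ℂ) - 1)
      = mellin (fun t : ℝ => 1 / ((rexp (2*π*t) : ℂ) - 1)) ((2*j:ℕ):ℂ) := by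
    rw [mellin]
    refine setIntegral_congr_fun measurableSet_Ioi fun t ht => ?_
    have he : (((2*j:ℕ):ℂ)) - 1 = ((2*j-1 : ℕ):ℂ) := by
      push_cast [Nat.cast_sub hm1]
      ring
    rw [smul_eq_mul, he, Complex.cpow_natCast, mul_one_div]
  have hgam : Complex.Gamma ((2*j:ℕ):ℂ) = ((2*j-1).factorial : ℂ) := by
    have h2 : ((2*j:ℕ):ℂ) = ((2*j-1:ℕ):ℂ) + 1 := by
      push_cast [Nat.cast_sub hm1]
      ring
    rw [h2, Complex.Gamma_nat_eq_factorial]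
  rw [hLHS, hmel, hc, hgam]
  have hfac : ((2*j).factorial : ℂ) = (2*j) * ((2*j-1).factorial : ℂ) := by
    have : (2*j).factorial = (2*j) * (2*j-1).factorial := by
      conv_lhs => rw [show 2*j = (2*j-1)+1 by omega]
      rw [Nat.factorial_succ]
      congr 1
      omega
    exact_mod_cast congrArg (Nat.cast : ℕ → ℂ) this
  have e1 : ((2*π:ℝ):ℂ)^(2*j) = 2^(2*j-1) * 2 * (π:ℂ)^(2*j) := by
    push_cast
    rw [mul_pow, ← pow_succ]
    congr 2
    omega
  have hπ : (π:ℂ) ≠ 0 := Complex.ofReal_ne_zero.mpr Real.pi_ne_zero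
  have hfne : ((2*j-1).factorial : ℂ) ≠ 0 := Nat.cast_ne_zero.mpr (Nat.factorial_ne_zero _)
  have hjne : ((j:ℂ)) ≠ 0 := Nat.cast_ne_zero.mpr hj
  push_cast [hfac, e1]
  field_simp
  ring_nf
  rw [show (2:ℂ)^(j*2) = 2^(j*2-1)*2 by rw [← pow_succ]; congr 1; omega]
  ring

lemma bir_integrable (k : ℕ) (hk : 1 ≤ k) :
    IntegrableOn (fun s : ℝ => (s:ℂ)^k / ((rexp (2*π*s) : ℂ) - 1)) (Set.Ioi 0) := by
  have hπ := Real.pi_pos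
  -- the dominating function
  have h0 := Real.GammaIntegral_convergent (s := (k:ℝ)) (by exact_mod_cast Nat.pos_of_ne_zero (by omega))
  rw [show (k:ℝ) - 1 = ((k-1 : ℕ) : ℝ) by push_cast [Nat.cast_sub hk]; ring] at h0
  simp_rw [Real.rpow_natCast] at h0
  rw [← mul_zero π, ← integrableOn_Ioi_comp_mul_left_iff _ _ hπ] at h0
  have hg : IntegrableOn
      (fun s : ℝ => (1/(2*π) / π^(k-1)) * (rexp (-(π*s)) * (π*s)^(k-1))) (Set.Ioi 0) :=
    h0.const_mul _
  refine hg.mono' ?_ ?_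
  · refine (ContinuousOn.div ?_ ?_ ?_).aestronglyMeasurable measurableSet_Ioi
    · exact (Complex.continuous_ofReal.pow k).continuousOn
    · exact ((Complex.continuous_ofReal.comp (Real.continuous_exp.comp
        (continuous_const.mul continuous_id))).sub continuous_const).continuousOn
    · intro s hs
      have h1 : (1:ℝ) < rexp (2*π*s) := by
        rw [Real.one_lt_exp_iff]
        have : (0:ℝ) < s := hs
        positivity
      rw [sub_ne_zero]
      intro h
      rw [← Complex.ofReal_one, Complex.ofReal_inj] at h
      linarith
  · filter_upwards [ae_restrict_mem measurableSet_Ioi] with s hs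
    have hs0 : (0:ℝ) < s := hs
    have h1 : (1:ℝ) < rexp (2*π*s) := by
      rw [Real.one_lt_exp_iff]; positivity
    have hnorm : ‖(s:ℂ)^k / ((rexp (2*π*s) : ℂ) - 1)‖ = s^k / (rexp (2*π*s) - 1) := by
      rw [norm_div]
      congr 1
      · rw [norm_pow, Complex.norm_real, Real.norm_eq_abs, abs_of_pos hs0]
      · rw [show ((rexp (2*π*s) : ℂ) - 1) = ((rexp (2*π*s) - 1 : ℝ) : ℂ) by push_cast; ring,
          Complex.norm_real, Real.norm_eq_abs, abs_of_pos (by linarith)]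
    rw [hnorm]
    have hineq : 2*π*s * rexp (π*s) ≤ rexp (2*π*s) - 1 := by
      have hsinh : π*s ≤ Real.sinh (π*s) := Real.self_le_sinh_iff.mpr (by positivity)
      have heq : rexp (2*π*s) - 1 = rexp (π*s) * (2 * Real.sinh (π*s)) := by
        rw [Real.sinh_eq]
        have e2 : (2:ℝ) * ((rexp (π*s) - rexp (-(π*s)))/2) = rexp (π*s) - rexp (-(π*s)) := by ring
        rw [e2, mul_sub, ← Real.exp_add, ← Real.exp_add]
        norm_num
        ring_nf
      rw [heq]
      have := Real.exp_pos (π*s)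
      nlinarith
    calc s^k / (rexp (2*π*s) - 1) ≤ s^k / (2*π*s * rexp (π*s)) := by
          have h2 : (0:ℝ) < 2*π*s * rexp (π*s) := by positivity
          gcongr
      _ = (1/(2*π) / π^(k-1)) * (rexp (-(π*s)) * (π*s)^(k-1)) := by
          have hek : (0:ℝ) < rexp (π*s) := Real.exp_pos _
          have hπk : (0:ℝ) < (π:ℝ)^(k-1) := by positivity
          rw [Real.exp_neg, mul_pow]
          rw [show s^k = s^(k-1)*s by rw [← pow_succ]; congr 1; omega]
          field_simp

/-- Integral representation of the Bernoulli polynomials: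
`Bₙ(x) = xⁿ − (n/2) x^{n−1} − i n ∫₀^∞ ((x+is)^{n−1} − (x−is)^{n−1})/(e^{2πs} − 1) ds`. -/
theorem bernoulli_integral_representation (n : ℕ) (hn : 1 ≤ n) (x : ℂ) :
    ((Polynomial.bernoulli n).map (algebraMap ℚ ℂ)).eval x =
      x ^ n - (n / 2 : ℂ) * x ^ (n - 1) -
        Complex.I * n *
          ∫ s in Set.Ioi (0 : ℝ),
            ((x + Complex.I * s) ^ (n - 1) - (x - Complex.I * s) ^ (n - 1)) /
              (Real.exp (2 * π * s) - 1) := by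
  obtain ⟨m, rfl⟩ : ∃ m, n = m + 1 := ⟨n - 1, by omega⟩
  simp only [Nat.add_sub_cancel]
  set c : ℕ → ℂ := fun k => (Nat.choose m k : ℂ) * x^(m-k) * Complex.I^k * (1 - (-1:ℂ)^k)
    with hc
  set J : ℕ → ℂ := fun k => ∫ s in Set.Ioi (0:ℝ), (s:ℂ)^k / ((rexp (2*π*s) : ℂ) - 1) with hJ
  have hbin : ∀ s : ℝ, ((x + Complex.I*s)^m - (x - Complex.I*s)^m)
      = ∑ k ∈ Finset.range (m+1), c k * (s:ℂ)^k := by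
    intro s
    rw [show x + Complex.I*s = Complex.I*s + x by ring,
      show x - Complex.I*s = -(Complex.I*(s:ℂ)) + x by ring,
      add_pow, add_pow, ← Finset.sum_sub_distrib]
    refine Finset.sum_congr rfl fun k hk => ?_
    rw [hc, mul_pow, neg_pow, mul_pow]
    ring
  have hintg : ∀ k ∈ Finset.range (m+1), IntegrableOn
      (fun s : ℝ => c k * ((s:ℂ)^k / ((rexp (2*π*s) : ℂ) - 1))) (Set.Ioi 0) := by
    intro k _
    rcases Nat.eq_zero_or_pos k with rfl | hk
    · have h0 : c 0 = 0 := by simp [hc]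
      simp only [h0, zero_mul]
      exact integrableOn_zero
    · exact (bir_integrable k hk).const_mul _
  have hsplit : (∫ s in Set.Ioi (0:ℝ),
        ((x + Complex.I*s)^m - (x - Complex.I*s)^m) / ((rexp (2*π*s):ℂ) - 1))
      = ∑ k ∈ Finset.range (m+1), c k * J k := by
    have heq : EqOn (fun s : ℝ => ((x + Complex.I*s)^m - (x - Complex.I*s)^m) /
          ((rexp (2*π*s):ℂ) - 1))
        (fun s : ℝ => ∑ k ∈ Finset.range (m+1), c k * ((s:ℂ)^k / ((rexp (2*π*s):ℂ) - 1)))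
        (Ioi 0) := by
      intro s _
      simp only
      rw [hbin s, Finset.sum_div]
      exact Finset.sum_congr rfl fun k _ => mul_div_assoc _ _ _
    rw [setIntegral_congr_fun measurableSet_Ioi heq, integral_finset_sum _ hintg]
    exact Finset.sum_congr rfl fun k _ => MeasureTheory.integral_const_mul _ _
  rw [hsplit]
  have hLHS : ((Polynomial.bernoulli (m+1)).map (algebraMap ℚ ℂ)).eval x
      = ∑ i ∈ Finset.range (m+2), (bernoulli i : ℂ) * (Nat.choose (m+1) i : ℂ) * x^(m+1-i) := by
    simp only [Polynomial.bernoulli, Polynomial.map_sum, Polynomial.map_monomial,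
      Polynomial.eval_finset_sum, Polynomial.eval_monomial, eq_ratCast, Rat.cast_mul,
      Rat.cast_natCast]
  rw [hLHS, show m+2 = (m+1)+1 from rfl, Finset.sum_range_succ']
  have hterm : ∀ k ∈ Finset.range (m+1),
      (_root_.bernoulli (k+1) : ℂ) * (Nat.choose (m+1) (k+1) : ℂ) * x^(m+1-(k+1))
        = -(Complex.I * ((m+1:ℕ):ℂ) * (c k * J k))
          - (if k = 0 then (((m+1:ℕ):ℂ)/2) * x^m else 0) := by
    intro k hk
    rcases Nat.eq_zero_or_pos k with rfl | hkpos
    · have h0 : c 0 = 0 := by simp [hc]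
      rw [h0, if_pos rfl, _root_.bernoulli_one]
      push_cast [Nat.choose_one_right]
      ring
    rcases Nat.even_or_odd k with he | ho
    · have h0 : c k = 0 := by
        rw [hc]
        simp [he.neg_one_pow]
      have hb : _root_.bernoulli (k+1) = 0 := by
        rw [bernoulli_eq_bernoulli'_of_ne_one (by omega)]
        exact bernoulli'_eq_zero_of_odd he.add_one (by omega)
      rw [h0, hb, if_neg (by omega)]
      push_cast
      ring
    · obtain ⟨a, ha⟩ := ho
      have hJk : J k = (-1)^(a+1+1) * (bernoulli (2*(a+1)) : ℂ) / (4*((a+1:ℕ):ℂ)) := by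
        have := bir_key (a+1) (by omega)
        rw [show 2*(a+1)-1 = k by omega] at this
        rw [hJ]
        exact this
      have hcho : ((m:ℂ)+1) * (Nat.choose m k : ℂ)
          = (Nat.choose (m+1) (k+1) : ℂ) * (2*(a:ℂ)+2) := by
        have h1 := Nat.add_one_mul_choose_eq m k
        have h2 : ((m+1) * Nat.choose m k : ℂ) = (Nat.choose (m+1) (k+1) * (k+1) : ℂ) := by
          exact_mod_cast congrArg (Nat.cast : ℕ → ℂ) h1
        have h3 : (k:ℂ) = 2*a+1 := by exact_mod_cast congrArg (Nat.cast : ℕ → ℂ) ha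
        push_cast at h2
        rw [h2, h3]
        ring
      have hIk : Complex.I^k = (-1:ℂ)^a * Complex.I := by
        rw [ha, pow_succ, pow_mul, Complex.I_sq]
      have hmk : m+1-(k+1) = m-k := by omega
      have hksgn : (-1:ℂ)^k = -1 := Odd.neg_one_pow ⟨a, by omega⟩
      have hsgn : (-1:ℂ)^(a+1+1) = (-1:ℂ)^a := by
        rw [pow_succ, pow_succ]
        ring
      have ht : (-1:ℂ)^a * (-1:ℂ)^a = 1 := by
        rw [← pow_add]
        exact Even.neg_one_pow ⟨a, rfl⟩
      have hII : Complex.I * Complex.I = -1 := Complex.I_mul_I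
      have haz : ((a:ℂ)+1) ≠ 0 := by
        have h1 : ((a+1:ℕ):ℂ) ≠ 0 := Nat.cast_ne_zero.mpr (by omega)
        push_cast at h1
        exact h1
      rw [hJk, hmk, if_neg (by omega), show k+1 = 2*(a+1) by omega]
      simp only [hc]
      rw [hIk, hksgn, hsgn]
      push_cast
      field_simp
      ring_nf
      rw [Complex.I_sq, show ((-1:ℂ))^(a*2) = 1 from Even.neg_one_pow ⟨a, by ring⟩]
      ring_nf
      have hcho2 : ((m:ℂ)+1) * (m.choose k : ℂ) = (((1+m).choose (2+a*2) : ℕ) : ℂ) * (2*(a:ℂ)+2) := by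
        rw [show 1+m = m+1 by omega, show 2+a*2 = k+1 by omega]
        exact hcho
      linear_combination (-2 * (_root_.bernoulli (2+a*2) : ℂ) * x^(m-k)) * hcho2
  rw [Finset.sum_congr rfl hterm, Finset.sum_sub_distrib,
    Finset.sum_ite_eq' (Finset.range (m+1)) (0:ℕ) (fun _ => (((m+1:ℕ):ℂ)/2) * x^m),
    if_pos (Finset.mem_range.mpr (by omega))]
  simp only [Finset.sum_neg_distrib, ← Finset.mul_sum]
  push_cast
  simp only [_root_.bernoulli_zero, Nat.choose_zero_right, Nat.cast_one, Rat.cast_one, one_mul]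
  ring
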